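/- The elements δ_x ⊗ δ_y with x ≠ y form a ℂ-basis of the kernel of the multiplication map μ : M ⊗ M → M, and the assignment S ↦ span_ℂ{δ_x ⊗ δ_y : (x,y) ∈ S} is a bijection from the set of subsets S ⊆ (Σ×Σ) \ diagonal onto the set of sub-bimodules of ker μ (ℂ-linear subspaces closed under left and right multiplication by elements of M in the two tensor factors). Consequently, first-order differential calculi on M (quotients of the universal calculus ker μ by sub-bimodules) are in bijective correspondence with subsets E ⊆ (Σ×Σ) \ diagonal. -/

import Mathlib

/- STATEMENT 0: For a finite set `S` and `M = S → ℂ`, the elements `δ_x ⊗ δ_y` (x ≠ y)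
form a ℂ-basis of `ker μ` (μ the multiplication map), and `E ↦ span{δ_x ⊗ δ_y : (x,y) ∈ E}`
is a bijection from subsets of the off-diagonal onto the sub-bimodules of `ker μ`. -/

open TensorProduct

noncomputable section

variable (S : Type*) [Fintype S] [DecidableEq S]

/-- The algebra of ℂ-valued functions on the finite set `S`. -/
abbrev M := S → ℂ

/-- The delta function at a point. -/
def delta (x : S) : M S := Pi.single x 1

/-- The multiplication map `μ : M ⊗ M → M`. -/
def mu : (M S) ⊗[ℂ] (M S) →ₗ[ℂ] M S := LinearMap.mul' ℂ (M S)

/-- The element `δ_x ⊗ δ_y` of `M ⊗ M` attached to a pair `p = (x, y)`. -/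
def deltaTensor (p : S × S) : (M S) ⊗[ℂ] (M S) := delta S p.1 ⊗ₜ[ℂ] delta S p.2

/-- The span of the `δ_x ⊗ δ_y` over a set of off-diagonal pairs. -/
def spanOf (E : Set {p : S × S // p.1 ≠ p.2}) : Submodule ℂ ((M S) ⊗[ℂ] (M S)) :=
  Submodule.span ℂ ((fun p : {p : S × S // p.1 ≠ p.2} => deltaTensor S p.1) '' E)

/-- A sub-bimodule of `ker μ`: a ℂ-subspace contained in `ker μ` and closed under
left multiplication by elements of `M` in the first tensor factor and right
multiplication in the second tensor factor. -/
def IsSubBimodule (N : Submodule ℂ ((M S) ⊗[ℂ] (M S))) : Prop :=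
  N ≤ LinearMap.ker (mu S) ∧
  (∀ (f : M S) (t), t ∈ N → (LinearMap.rTensor (M S) (LinearMap.mulLeft ℂ f)) t ∈ N) ∧
  (∀ (f : M S) (t), t ∈ N → (LinearMap.lTensor (M S) (LinearMap.mulRight ℂ f)) t ∈ N)

-- AUX
def Bb : Module.Basis (S × S) ℂ ((M S) ⊗[ℂ] (M S)) :=
  Module.Basis.tensorProduct (Pi.basisFun ℂ S) (Pi.basisFun ℂ S)

lemma Bb_apply (p : S × S) : Bb S p = deltaTensor S p := by
  simp [Bb, Module.Basis.tensorProduct_apply', deltaTensor, delta, Pi.basisFun_apply]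

lemma delta_apply (x i : S) : delta S x i = if i = x then 1 else 0 := by
  simp [delta, Pi.single_apply]

lemma delta_mul (x y : S) : delta S x * delta S y = if x = y then delta S x else 0 := by
  ext i
  by_cases h : x = y <;> by_cases h2 : x = i <;>
    simp_all [delta_apply, Pi.mul_apply, eq_comm]

lemma mul_delta (f : M S) (a : S) : f * delta S a = f a • delta S a := by
  ext i
  by_cases h : a = i <;> simp_all [delta_apply, Pi.mul_apply, eq_comm]

lemma mu_deltaTensor (p : S × S) :
    mu S (deltaTensor S p) = if p.1 = p.2 then delta S p.1 else 0 := by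
  simp [mu, deltaTensor, LinearMap.mul'_apply, delta_mul]

lemma mu_deltaTensor_apply (p : S × S) (x : S) :
    mu S (deltaTensor S p) x = if p = (x, x) then 1 else 0 := by
  obtain ⟨a, b⟩ := p
  rw [mu_deltaTensor]
  by_cases h : a = b <;> by_cases h2 : a = x <;>
    simp_all [delta_apply, Prod.ext_iff, eq_comm]

lemma repr_diag (t : (M S) ⊗[ℂ] (M S)) (ht : t ∈ LinearMap.ker (mu S)) (x : S) :
    (Bb S).repr t (x, x) = 0 := by
  have h0 : mu S t x = 0 := by rw [LinearMap.mem_ker.mp ht]; rfl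
  have h : mu S t x = (Bb S).repr t (x, x) := by
    conv_lhs => rw [← (Bb S).sum_repr t]
    rw [map_sum]
    simp only [map_smul, Bb_apply, Finset.sum_apply, Pi.smul_apply,
      mu_deltaTensor_apply, smul_eq_mul, mul_ite, mul_one, mul_zero]
    simp
  rw [← h, h0]

lemma P_deltaTensor (x y : S) (p : S × S) :
    (LinearMap.rTensor (M S) (LinearMap.mulLeft ℂ (delta S x)))
      ((LinearMap.lTensor (M S) (LinearMap.mulRight ℂ (delta S y))) (deltaTensor S p)) =
    if p = (x, y) then deltaTensor S p else 0 := by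
  obtain ⟨a, b⟩ := p
  simp only [deltaTensor, LinearMap.lTensor_tmul, LinearMap.rTensor_tmul,
    LinearMap.mulRight_apply, LinearMap.mulLeft_apply]
  by_cases h1 : x = a <;> by_cases h2 : b = y <;>
    simp_all [delta_mul, Prod.ext_iff, eq_comm]

lemma P_apply (x y : S) (t : (M S) ⊗[ℂ] (M S)) :
    (LinearMap.rTensor (M S) (LinearMap.mulLeft ℂ (delta S x)))
      ((LinearMap.lTensor (M S) (LinearMap.mulRight ℂ (delta S y))) t) =
    (Bb S).repr t (x, y) • deltaTensor S (x, y) := by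
  conv_lhs => rw [← (Bb S).sum_repr t]
  rw [map_sum, map_sum]
  simp only [map_smul, Bb_apply, P_deltaTensor, smul_ite, smul_zero]
  simp

lemma ker_eq : LinearMap.ker (mu S) =
    Submodule.span ℂ (Set.range (fun p : {p : S × S // p.1 ≠ p.2} => deltaTensor S p.1)) := by
  apply le_antisymm
  · intro t ht
    rw [show t = ∑ p : S × S, (Bb S).repr t p • Bb S p from ((Bb S).sum_repr t).symm]
    refine Submodule.sum_mem _ fun p _ => ?_
    by_cases h : p.1 = p.2
    · have : (Bb S).repr t p = 0 := by
        have := repr_diag S t ht p.1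
        rwa [show ((p.1 : S), p.1) = p from by rw [Prod.ext_iff]; exact ⟨rfl, h⟩] at this
      simp [this]
    · exact Submodule.smul_mem _ _ (Submodule.subset_span ⟨⟨p, h⟩, (Bb_apply S p).symm⟩)
  · rw [Submodule.span_le]
    rintro _ ⟨p, rfl⟩
    simp [LinearMap.mem_ker, mu_deltaTensor, p.2]

lemma li_v : LinearIndependent ℂ (fun p : {p : S × S // p.1 ≠ p.2} => deltaTensor S p.1) := by
  have h := (Bb S).linearIndependent.comp
    (Subtype.val : {p : S × S // p.1 ≠ p.2} → S × S) Subtype.val_injective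
  have hv : ((Bb S) ∘ (Subtype.val : {p : S × S // p.1 ≠ p.2} → S × S)) =
      fun p => deltaTensor S p.1 := funext fun p => Bb_apply S p.1
  rwa [hv] at h


theorem deltaTensor_basis_ker_mul_and_subbimodule_bijection :
    (∃ b : Module.Basis {p : S × S // p.1 ≠ p.2} ℂ (LinearMap.ker (mu S)),
      ∀ p, (b p : (M S) ⊗[ℂ] (M S)) = deltaTensor S p.1) ∧
    Set.BijOn (spanOf S) Set.univ {N | IsSubBimodule S N} := by
  constructor
  · refine ⟨(Module.Basis.span (li_v S)).map (LinearEquiv.ofEq _ _ (ker_eq S).symm), fun p => ?_⟩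
    simp [Module.Basis.map_apply, LinearEquiv.coe_ofEq_apply, Module.Basis.span_apply]
  · refine ⟨fun E _ => ⟨?_, fun f t ht => ?_, fun f t ht => ?_⟩, fun E₁ _ E₂ _ hE => ?_, fun N hN => ?_⟩
    · -- spanOf E ≤ ker μ
      rw [spanOf, Submodule.span_le]
      rintro _ ⟨p, _, rfl⟩
      simp [LinearMap.mem_ker, mu_deltaTensor, p.2]
    · -- closed under left mult
      have hmap : Submodule.map (LinearMap.rTensor (M S) (LinearMap.mulLeft ℂ f))
          (spanOf S E) ≤ spanOf S E := by
        rw [spanOf, Submodule.map_span, Submodule.span_le]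
        rintro _ ⟨_, ⟨p, hp, rfl⟩, rfl⟩
        have : (LinearMap.rTensor (M S) (LinearMap.mulLeft ℂ f)) (deltaTensor S p.1) =
            f p.1.1 • deltaTensor S p.1 := by
          simp [deltaTensor, LinearMap.rTensor_tmul, LinearMap.mulLeft_apply, mul_delta,
            smul_tmul']
        rw [this]
        exact Submodule.smul_mem _ _ (Submodule.subset_span ⟨p, hp, rfl⟩)
      exact hmap ⟨t, ht, rfl⟩
    · -- closed under right mult
      have hmap : Submodule.map (LinearMap.lTensor (M S) (LinearMap.mulRight ℂ f))
          (spanOf S E) ≤ spanOf S E := by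
        rw [spanOf, Submodule.map_span, Submodule.span_le]
        rintro _ ⟨_, ⟨p, hp, rfl⟩, rfl⟩
        have : (LinearMap.lTensor (M S) (LinearMap.mulRight ℂ f)) (deltaTensor S p.1) =
            f p.1.2 • deltaTensor S p.1 := by
          simp [deltaTensor, LinearMap.lTensor_tmul, LinearMap.mulRight_apply, mul_comm,
            mul_delta, smul_tmul]
        rw [this]
        exact Submodule.smul_mem _ _ (Submodule.subset_span ⟨p, hp, rfl⟩)
      exact hmap ⟨t, ht, rfl⟩
    · -- injectivity
      have key : ∀ E₁ E₂ : Set {p : S × S // p.1 ≠ p.2}, spanOf S E₁ = spanOf S E₂ → E₁ ⊆ E₂ := by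
        intro E₁ E₂ h p hp
        by_contra hp2
        have hmem : deltaTensor S p.1 ∈ spanOf S E₂ := by
          rw [← h]; exact Submodule.subset_span ⟨p, hp, rfl⟩
        exact (li_v S).notMem_span_image hp2 hmem
      exact le_antisymm (key _ _ hE) (key _ _ hE.symm)
    · -- surjectivity
      refine ⟨{p | deltaTensor S p.1 ∈ N}, Set.mem_univ _, le_antisymm ?_ ?_⟩
      · rw [spanOf, Submodule.span_le]
        rintro _ ⟨p, hp, rfl⟩
        exact hp
      · intro t ht
        rw [show t = ∑ p : S × S, (Bb S).repr t p • Bb S p from ((Bb S).sum_repr t).symm]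
        refine Submodule.sum_mem _ fun p _ => ?_
        by_cases h : p.1 = p.2
        · have : (Bb S).repr t p = 0 := by
            have := repr_diag S t (hN.1 ht) p.1
            rwa [show ((p.1 : S), p.1) = p from by rw [Prod.ext_iff]; exact ⟨rfl, h⟩] at this
          simp [this]
        · by_cases hc : (Bb S).repr t p = 0
          · simp [hc]
          · have hPN : (Bb S).repr t p • deltaTensor S p ∈ N := by
              have h1 := hN.2.2 (delta S p.2) t ht
              have h2 := hN.2.1 (delta S p.1) _ h1
              rwa [P_apply, show ((p.1 : S), p.2) = p from rfl] at h2
            have hdN : deltaTensor S p ∈ N := by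
              have := N.smul_mem ((Bb S).repr t p)⁻¹ hPN
              rwa [smul_smul, inv_mul_cancel₀ hc, one_smul] at this
            rw [Bb_apply]
            exact Submodule.smul_mem _ _
              (Submodule.subset_span ⟨⟨p, h⟩, hdN, rfl⟩)


end
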